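/- arXiv:1105.3620 — 6 statements merged into one kernel-verified Lean document; each statement's English description precedes it below -/
import Mathlib

section
/- Let φ be an AM-chain-homotopy for a chain complex C of ℤ-modules, and let π be the associated family of maps. Then π is idempotent: for every q, π_q ∘ π_q = π_q; in particular π_q(h) = h for every h in the image of π_q. -/
/-- Let `φ` be an AM-chain-homotopy for a chain complex `C` of `ℤ`-modules
and let `π` be the associated family of maps. Then `π` is idempotent: for every `q`,
`π_q ∘ π_q = π_q`; in particular `π_q h = h` for every `h` in the image of `π_q`. -/
theorem am_homotopy_pi_idempotent
    (C : ℕ → Type*) [∀ n, AddCommGroup (C n)] [∀ n, Module ℤ (C n)]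
    (d : ∀ n, C (n + 1) →ₗ[ℤ] C n)
    (hdd : ∀ n, (d n).comp (d (n + 1)) = 0)
    (φ : ∀ n, C n →ₗ[ℤ] C (n + 1))
    (hφφ : ∀ n, (φ (n + 1)).comp (φ n) = 0)
    (hφdφ : ∀ n, (φ n).comp ((d n).comp (φ n)) = φ n)
    (π : ∀ n, C n →ₗ[ℤ] C n)
    (hπ0 : π 0 = LinearMap.id - (d 0).comp (φ 0))
    (hπ : ∀ n, π (n + 1) =
      LinearMap.id - (φ n).comp (d n) - (d (n + 1)).comp (φ (n + 1))) :
    (∀ q, (π q).comp (π q) = π q) ∧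
      ∀ q, ∀ h ∈ LinearMap.range (π q), π q h = h := by
  have hdd' : ∀ n x, d n (d (n + 1) x) = 0 := fun n x =>
    congrArg (fun f => f x) (hdd n)
  have hφφ' : ∀ n x, φ (n + 1) (φ n x) = 0 := fun n x =>
    congrArg (fun f => f x) (hφφ n)
  have hφdφ' : ∀ n x, φ n (d n (φ n x)) = φ n x := fun n x =>
    congrArg (fun f => f x) (hφdφ n)
  have key : ∀ q, (π q).comp (π q) = π q := by
    intro q
    ext x
    match q with
    | 0 =>
      simp only [hπ0, LinearMap.comp_apply, LinearMap.sub_apply,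
        LinearMap.id_apply, map_sub, hφdφ']
      abel
    | n + 1 =>
      simp only [hπ, LinearMap.comp_apply, LinearMap.sub_apply,
        LinearMap.id_apply, map_sub, hφdφ', hφφ', hdd', map_zero]
      abel
  refine ⟨key, fun q h hh => ?_⟩
  obtain ⟨y, rfl⟩ := hh
  exact congrArg (fun f => f y) (key q)
end

section
/- Let φ be an AM-chain-homotopy for a chain complex C of ℤ-modules, let π be the associated family of maps, and let M be the subcomplex of C with M_q = im π_q and differential the restriction of ∂. Then the corestriction f of π to M, the inclusion g : M → C, and φ form a chain contraction of C to M: f and g are chain maps, f_q ∘ g_q = id_{M_q} for every q, and φ_{q−1}∘∂_q + ∂_{q+1}∘φ_q = id_{C_q} − g_q∘f_q for every q. -/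
/-- Let `φ` be an AM-chain-homotopy for a chain complex `C` of `ℤ`-modules,
`π` the associated family of maps, and `M` the subcomplex with `M_q = im π_q` and
differential the restriction of `∂` (the existence of this restriction is the first
assertion `hres`).  Then the corestriction `f` of `π` to `M`, the inclusion `g : M → C`,
and `φ` form a chain contraction of `C` to `M`: `f` and `g` are chain maps,
`f_q ∘ g_q = id` on `M_q` for every `q`, and
`φ_{q−1}∘∂_q + ∂_{q+1}∘φ_q = id − g_q∘f_q` for every `q` (the degree-0 instance reading
`∂_1∘φ_0 = id − g_0∘f_0`, since `φ_{−1} = 0`). -/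
theorem am_homotopy_chain_contraction
    (C : ℕ → Type*) [∀ n, AddCommGroup (C n)] [∀ n, Module ℤ (C n)]
    (d : ∀ n, C (n + 1) →ₗ[ℤ] C n)
    (hdd : ∀ n, (d n).comp (d (n + 1)) = 0)
    (φ : ∀ n, C n →ₗ[ℤ] C (n + 1))
    (hφφ : ∀ n, (φ (n + 1)).comp (φ n) = 0)
    (hφdφ : ∀ n, (φ n).comp ((d n).comp (φ n)) = φ n)
    (π : ∀ n, C n →ₗ[ℤ] C n)
    (hπ0 : π 0 = LinearMap.id - (d 0).comp (φ 0))
    (hπ : ∀ n, π (n + 1) =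
      LinearMap.id - (φ n).comp (d n) - (d (n + 1)).comp (φ (n + 1))) :
    ∃ hres : ∀ q, ∀ x ∈ LinearMap.range (π (q + 1)), d q x ∈ LinearMap.range (π q),
      -- f is a chain map (f := corestriction of π to M, M's differential := restriction of d)
      (∀ q, ((d q).restrict (hres q)).comp (π (q + 1)).rangeRestrict =
          ((π q).rangeRestrict).comp (d q)) ∧
      -- g is a chain map (g := inclusion of M into C)
      (∀ q, ((LinearMap.range (π q)).subtype).comp ((d q).restrict (hres q)) =
          (d q).comp (LinearMap.range (π (q + 1))).subtype) ∧
      -- f ∘ g = id on M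
      (∀ q, ∀ x : LinearMap.range (π q),
          (π q).rangeRestrict ((LinearMap.range (π q)).subtype x) = x) ∧
      -- homotopy identity  φ∘∂ + ∂∘φ = id − g∘f
      ((d 0).comp (φ 0) =
          LinearMap.id - ((LinearMap.range (π 0)).subtype).comp (π 0).rangeRestrict) ∧
      (∀ q, (φ q).comp (d q) + (d (q + 1)).comp (φ (q + 1)) =
          LinearMap.id -
            ((LinearMap.range (π (q + 1))).subtype).comp (π (q + 1)).rangeRestrict) := by
  -- π commutes with d (pointwise)
  have hcomm : ∀ q (x : C (q + 1)), d q (π (q + 1) x) = π q (d q x) := by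
    intro q x
    have hdd' : ∀ n (y : C (n+2)), d n (d (n+1) y) = 0 := by
      intro n y
      have := congrFun (congrArg DFunLike.coe (hdd n)) y
      simpa using this
    cases q with
    | zero =>
      simp [hπ0, hπ 0, LinearMap.sub_apply, map_sub, hdd' 0]
    | succ p =>
      simp [hπ p, hπ (p+1), LinearMap.sub_apply, map_sub, hdd' p, hdd' (p+1)]
  -- π is idempotent (pointwise)
  have hidem : ∀ q (x : C q), π q (π q x) = π q x := by
    intro q x
    have hφdφ' : ∀ n (y : C n), φ n (d n (φ n y)) = φ n y := by
      intro n y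
      have := congrFun (congrArg DFunLike.coe (hφdφ n)) y
      simpa using this
    have hφφ' : ∀ n (y : C n), φ (n+1) (φ n y) = 0 := by
      intro n y
      have := congrFun (congrArg DFunLike.coe (hφφ n)) y
      simpa using this
    have hdd' : ∀ n (y : C (n+2)), d n (d (n+1) y) = 0 := by
      intro n y
      have := congrFun (congrArg DFunLike.coe (hdd n)) y
      simpa using this
    cases q with
    | zero =>
      simp only [hπ0, LinearMap.sub_apply, LinearMap.id_apply, LinearMap.comp_apply,
        map_sub, hφdφ' 0]
      abel
    | succ p =>
      simp only [hπ p, LinearMap.sub_apply, LinearMap.id_apply, LinearMap.comp_apply,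
        map_sub, hφdφ' p, hφdφ' (p+1), hφφ' p, hdd' p, map_zero]
      abel
  have hres : ∀ q, ∀ x ∈ LinearMap.range (π (q + 1)), d q x ∈ LinearMap.range (π q) := by
    rintro q x ⟨y, rfl⟩
    exact ⟨d q y, (hcomm q y).symm⟩
  refine ⟨hres, ?_, ?_, ?_, ?_, ?_⟩
  · intro q
    exact DFunLike.coe_injective (funext fun x => Subtype.ext (hcomm q x))
  · intro q
    rfl
  · rintro q ⟨x, y, rfl⟩
    exact Subtype.ext (hidem q y)
  · have : ((LinearMap.range (π 0)).subtype).comp (π 0).rangeRestrict = π 0 := rfl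
    rw [this, hπ0]; abel
  · intro q
    have : ((LinearMap.range (π (q+1))).subtype).comp (π (q+1)).rangeRestrict = π (q+1) := rfl
    rw [this, hπ q]; abel
end

section
/- Let (C,∂) be a chain complex of ℤ-modules in Smith-normal-form shape with respect to bases (b^n_i), pairings j_n and coefficients λ^n_i, and let φ be the associated discrete-vector-field homotopy. Then φ is an AM-chain-homotopy: φ_n ∘ φ_{n−1} = 0 and φ_{n−1} ∘ ∂_n ∘ φ_{n−1} = φ_{n−1} for every n. -/
/-- Let `(C,∂)` be a chain complex of `ℤ`-modules in Smith-normal-form shape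
with respect to bases `b`, pairings `jmap` and coefficients `lam` (here
`d m : C (m+1) → C m` is the differential `∂_{m+1}`), and let `φ` be the associated
discrete-vector-field homotopy.  Then `φ` is an AM-chain-homotopy:
`φ_{m+1} ∘ φ_m = 0` and `φ_m ∘ ∂_{m+1} ∘ φ_m = φ_m` for every `m`. -/
theorem snf_dvf_homotopy_is_am_homotopy
    (C : ℕ → Type*) [∀ n, AddCommGroup (C n)] [∀ n, Module ℤ (C n)]
    (d : ∀ n, C (n + 1) →ₗ[ℤ] C n)
    (hdd : ∀ n, (d n).comp (d (n + 1)) = 0)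
    -- every `C n` is free with a finite basis indexed by `I n`
    (I : ℕ → Type*) [∀ n, Fintype (I n)] (b : ∀ n, Module.Basis (I n) ℤ (C n))
    -- Smith-normal-form shape: `Jset m ⊆ I (m+1)`, injection `jmap m` into `I m`,
    -- positive integers `lam m`, with `∂ b i = λ_i • b (j i)` on `Jset` and `∂ b i = 0` off it
    (Jset : ∀ m, Set (I (m + 1)))
    (jmap : ∀ m, Jset m → I m) (hinj : ∀ m, Function.Injective (jmap m))
    (lam : ∀ m, Jset m → ℤ) (hpos : ∀ m (i : Jset m), 0 < lam m i)
    (hd_mem : ∀ m (i : Jset m), d m (b (m + 1) i) = lam m i • b m (jmap m i))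
    (hd_not : ∀ m (i : I (m + 1)), i ∉ Jset m → d m (b (m + 1) i) = 0)
    -- the associated discrete-vector-field homotopy `φ`, defined on basis elements
    (φ : ∀ n, C n →ₗ[ℤ] C (n + 1))
    (hφ_one : ∀ m (i : Jset m), lam m i = 1 → φ m (b m (jmap m i)) = b (m + 1) i)
    (hφ_zero : ∀ m (k : I m),
      (¬ ∃ i : Jset m, lam m i = 1 ∧ jmap m i = k) → φ m (b m k) = 0) :
    (∀ m, (φ (m + 1)).comp (φ m) = 0) ∧
      (∀ m, (φ m).comp ((d m).comp (φ m)) = φ m) := by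
  -- cancellation: `C n` has no ℤ-torsion since it is free
  have hsmul : ∀ (n : ℕ) (a : ℤ) (x : C n), a • x = 0 → a = 0 ∨ x = 0 := by
    intro n a x h
    rw [← int_smul_eq_zsmul inferInstance a x] at h
    exact (b n).smul_eq_zero.mp h
  -- key fact: φ vanishes on basis elements `b (m+1) i` with `i ∈ Jset m`
  have key : ∀ m (i : Jset m), φ (m + 1) (b (m + 1) (i : I (m + 1))) = 0 := by
    intro m i
    apply hφ_zero
    rintro ⟨i', h1, h2⟩
    have hdd' : d m (d (m + 1) (b (m + 2) i')) = 0 := by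
      have := congrArg (fun f => f (b (m + 2) i')) (hdd m)
      simpa using this
    rw [hd_mem (m + 1) i', map_zsmul, h1, one_zsmul, h2, hd_mem m i] at hdd'
    rcases hsmul m _ _ hdd' with h | h
    · exact absurd h (ne_of_gt (hpos m i))
    · exact (b m).ne_zero _ h
  constructor
  · intro m
    apply (b m).ext
    intro k
    simp only [LinearMap.comp_apply, LinearMap.zero_apply]
    by_cases h : ∃ i : Jset m, lam m i = 1 ∧ jmap m i = k
    · obtain ⟨i, h1, h2⟩ := h
      rw [← h2, hφ_one m i h1, key]
    · rw [hφ_zero m k h, map_zero]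
  · intro m
    apply (b m).ext
    intro k
    simp only [LinearMap.comp_apply]
    by_cases h : ∃ i : Jset m, lam m i = 1 ∧ jmap m i = k
    · obtain ⟨i, h1, h2⟩ := h
      rw [← h2, hφ_one m i h1, hd_mem m i, h1, one_zsmul]
      exact hφ_one m i h1
    · rw [hφ_zero m k h, map_zero, map_zero]
end

section
/- Let (C,∂) be a chain complex of ℤ-modules in Smith-normal-form shape with respect to bases (b^n_i), pairings j_n and coefficients λ^n_i, let φ be the associated discrete-vector-field homotopy, and set π_n = id − φ_{n−1}∘∂_n − ∂_{n+1}∘φ_n. Then for every basis element b^n_i: π_n(b^n_i) = 0 if either (i ∈ J_n and λ^n_i = 1) or (i = j_{n+1}(k) for some k ∈ J_{n+1} with λ^{n+1}_k = 1), and π_n(b^n_i) = b^n_i in all other cases. Consequently im π_n is the free ℤ-module spanned by the basis elements of the latter kind. -/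
/-- `killed I Jset jmap lam m k` says that the basis element `b m k` disappears in
`im π`: either (for `m = p + 1`) `k` lies in `J` of its own level with coefficient `1`
(i.e. `∂_{p+1}(b k) = b (jmap k)`), or `k = jmap i` for some `i` in the level above with
coefficient `1` (i.e. `b k = ∂(b i)`). -/
def killed (I : ℕ → Type*) (Jset : ∀ m, Set (I (m + 1)))
    (jmap : ∀ m, Jset m → I m) (lam : ∀ m, Jset m → ℤ) : ∀ m, I m → Prop
  | 0, k => ∃ i : Jset 0, lam 0 i = 1 ∧ jmap 0 i = k
  | (p + 1), k => (∃ h : k ∈ Jset p, lam p ⟨k, h⟩ = 1) ∨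
      ∃ i : Jset (p + 1), lam (p + 1) i = 1 ∧ jmap (p + 1) i = k

/-- Let `(C,∂)` be a chain complex of `ℤ`-modules in Smith-normal-form shape
with respect to bases `b`, pairings `jmap` and coefficients `lam`, let `φ` be the
associated discrete-vector-field homotopy and `π = id − φ∘∂ − ∂∘φ`.  Then for every basis
element `b m k`: `π (b m k) = 0` if `k` is `killed` (i.e. either `k` pairs downwards with
coefficient `1` or `k` is hit from above with coefficient `1`), and `π (b m k) = b m k`
in all other cases.  Consequently `im π_m` is the (free) `ℤ`-submodule spanned by the
non-killed basis elements. -/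
theorem snf_pi_on_basis
    (C : ℕ → Type*) [∀ n, AddCommGroup (C n)] [∀ n, Module ℤ (C n)]
    (d : ∀ n, C (n + 1) →ₗ[ℤ] C n)
    (hdd : ∀ n, (d n).comp (d (n + 1)) = 0)
    -- every `C n` is free with a finite basis indexed by `I n`
    (I : ℕ → Type*) [∀ n, Fintype (I n)] (b : ∀ n, Module.Basis (I n) ℤ (C n))
    -- Smith-normal-form shape: `Jset m ⊆ I (m+1)`, injection `jmap m` into `I m`,
    -- positive integers `lam m`, with `∂ b i = λ_i • b (j i)` on `Jset` and `∂ b i = 0` off it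
    (Jset : ∀ m, Set (I (m + 1)))
    (jmap : ∀ m, Jset m → I m) (hinj : ∀ m, Function.Injective (jmap m))
    (lam : ∀ m, Jset m → ℤ) (hpos : ∀ m (i : Jset m), 0 < lam m i)
    (hd_mem : ∀ m (i : Jset m), d m (b (m + 1) i) = lam m i • b m (jmap m i))
    (hd_not : ∀ m (i : I (m + 1)), i ∉ Jset m → d m (b (m + 1) i) = 0)
    -- the associated discrete-vector-field homotopy `φ`, defined on basis elements
    (φ : ∀ n, C n →ₗ[ℤ] C (n + 1))
    (hφ_one : ∀ m (i : Jset m), lam m i = 1 → φ m (b m (jmap m i)) = b (m + 1) i)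
    (hφ_zero : ∀ m (k : I m),
      (¬ ∃ i : Jset m, lam m i = 1 ∧ jmap m i = k) → φ m (b m k) = 0)
    (π : ∀ n, C n →ₗ[ℤ] C n)
    (hπ0 : π 0 = LinearMap.id - (d 0).comp (φ 0))
    (hπ : ∀ n, π (n + 1) =
      LinearMap.id - (φ n).comp (d n) - (d (n + 1)).comp (φ (n + 1))) :
    (∀ m (k : I m),
      (killed I Jset jmap lam m k → π m (b m k) = 0) ∧
      (¬ killed I Jset jmap lam m k → π m (b m k) = b m k)) ∧
    (∀ m, LinearMap.range (π m) =
      Submodule.span ℤ ((b m) '' {k | ¬ killed I Jset jmap lam m k})) := by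
  classical
  have key : ∀ m (k : I m),
      (killed I Jset jmap lam m k → π m (b m k) = 0) ∧
      (¬ killed I Jset jmap lam m k → π m (b m k) = b m k) := by
    intro m k
    cases m with
    | zero =>
      constructor
      · rintro ⟨i, hl, hj⟩
        rw [hπ0]
        simp only [LinearMap.sub_apply, LinearMap.id_apply, LinearMap.comp_apply]
        rw [← hj, hφ_one 0 i hl, hd_mem, hl]
        simp
      · intro hnk
        rw [hπ0]
        simp only [LinearMap.sub_apply, LinearMap.id_apply, LinearMap.comp_apply]
        rw [hφ_zero 0 k hnk, map_zero, sub_zero]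
    | succ p =>
      constructor
      · rintro (⟨h, hl⟩ | ⟨i, hl, hj⟩)
        · -- k pairs downward with coefficient 1
          have hnotup : ¬ ∃ i : Jset (p + 1), lam (p + 1) i = 1 ∧ jmap (p + 1) i = k := by
            rintro ⟨i, hl', hj'⟩
            have h1 : d (p + 1) (b (p + 2) i) = b (p + 1) k := by
              rw [hd_mem, hl']
              simp [hj']
            have h2 : d p (b (p + 1) k) = 0 := by
              rw [← h1]
              exact congrArg (fun f => f (b (p + 2) i)) (hdd p)
            rw [hd_mem p ⟨k, h⟩, hl] at h2
            exact (b p).ne_zero _ (by simpa using h2)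
          rw [hπ]
          simp only [LinearMap.sub_apply, LinearMap.id_apply, LinearMap.comp_apply]
          rw [hφ_zero (p + 1) k hnotup, map_zero, sub_zero, hd_mem p ⟨k, h⟩, hl]
          simp [hφ_one p ⟨k, h⟩ hl]
        · -- k is hit from above with coefficient 1
          have hdk : d p (b (p + 1) k) = 0 := by
            have h1 : d (p + 1) (b (p + 2) i) = b (p + 1) k := by
              rw [hd_mem, hl]
              simp [hj]
            rw [← h1]
            exact congrArg (fun f => f (b (p + 2) i)) (hdd p)
          have hφk : φ (p + 1) (b (p + 1) k) = b (p + 2) i := by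
            rw [← hj]; exact hφ_one (p + 1) i hl
          rw [hπ]
          simp only [LinearMap.sub_apply, LinearMap.id_apply, LinearMap.comp_apply]
          rw [hdk, map_zero, sub_zero, hφk, hd_mem, hl]
          simp [hj]
      · intro hnk
        have hnk1 : ¬ ∃ h : k ∈ Jset p, lam p ⟨k, h⟩ = 1 := fun hh => hnk (Or.inl hh)
        have hnk2 : ¬ ∃ i : Jset (p + 1), lam (p + 1) i = 1 ∧ jmap (p + 1) i = k :=
          fun hh => hnk (Or.inr hh)
        have hφd : φ p (d p (b (p + 1) k)) = 0 := by
          by_cases h : k ∈ Jset p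
          · have hlne : lam p ⟨k, h⟩ ≠ 1 := fun hl => hnk1 ⟨h, hl⟩
            have : ¬ ∃ i : Jset p, lam p i = 1 ∧ jmap p i = jmap p ⟨k, h⟩ := by
              rintro ⟨i, hl, hj⟩
              exact hlne (hinj p hj ▸ hl)
            rw [hd_mem p ⟨k, h⟩]
            rw [map_zsmul, hφ_zero p _ this, zsmul_zero]
          · rw [hd_not p k h, map_zero]
        rw [hπ]
        simp only [LinearMap.sub_apply, LinearMap.id_apply, LinearMap.comp_apply]
        rw [hφd, hφ_zero (p + 1) k hnk2, map_zero, sub_zero, sub_zero]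
  refine ⟨key, fun m => ?_⟩
  apply le_antisymm
  · rw [LinearMap.range_eq_map, ← (b m).span_eq, Submodule.map_span]
    apply Submodule.span_le.2
    rintro _ ⟨_, ⟨k, rfl⟩, rfl⟩
    by_cases hk : killed I Jset jmap lam m k
    · rw [(key m k).1 hk]; exact Submodule.zero_mem _
    · rw [(key m k).2 hk]; exact Submodule.subset_span ⟨k, hk, rfl⟩
  · apply Submodule.span_le.2
    rintro _ ⟨k, hk, rfl⟩
    exact ⟨b m k, (key m k).2 hk⟩
end

section
/- Let φ be an AM-chain-homotopy for a chain complex C of ℤ-modules, let π be the associated family of maps, and let M be the subcomplex of C with M_q = im π_q and differential the restriction of ∂. Then for every q, the q-th cohomology of the cochain complex Hom_ℤ(C,ℤ) is isomorphic to the q-th cohomology of Hom_ℤ(M,ℤ). -/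
attribute [local instance 2000] Submodule.module

/-- The `q`-cocycles of the cochain complex `Hom_ℤ(D, ℤ)` of a chain complex `D` with
differentials `dD n : D (n+1) → D n`: the kernel of the codifferential
`δ^q = (dD q).dualMap`, `δ^q(c) = c ∘ ∂_{q+1}`. -/
def cocyc (D : ℕ → Type*) [∀ n, AddCommGroup (D n)] [∀ n, Module ℤ (D n)]
    (dD : ∀ n, D (n + 1) →ₗ[ℤ] D n) (q : ℕ) : Submodule ℤ (Module.Dual ℤ (D q)) :=
  LinearMap.ker (dD q).dualMap

/-- The `q`-coboundaries of the cochain complex `Hom_ℤ(D, ℤ)`: the image of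
`δ^{q-1}` (which is `0` for `q = 0`). -/
def cobnd (D : ℕ → Type*) [∀ n, AddCommGroup (D n)] [∀ n, Module ℤ (D n)]
    (dD : ∀ n, D (n + 1) →ₗ[ℤ] D n) : ∀ q, Submodule ℤ (Module.Dual ℤ (D q))
  | 0 => ⊥
  | (q + 1) => LinearMap.range (dD q).dualMap

/-- Let `φ` be an AM-chain-homotopy for a chain complex `C` of `ℤ`-modules,
`π` the associated family of maps, and `M` the subcomplex with `M_q = im π_q` and
differential the restriction of `∂` (whose existence is the assertion `hres`).  Then for
every `q`, the `q`-th cohomology `ker δ^q / im δ^{q−1}` of the cochain complex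
`Hom_ℤ(C, ℤ)` is isomorphic to the `q`-th cohomology of `Hom_ℤ(M, ℤ)`. -/
theorem am_homotopy_cohomology_iso_subcomplex
    (C : ℕ → Type*) [∀ n, AddCommGroup (C n)] [∀ n, Module ℤ (C n)]
    (d : ∀ n, C (n + 1) →ₗ[ℤ] C n)
    (hdd : ∀ n, (d n).comp (d (n + 1)) = 0)
    (φ : ∀ n, C n →ₗ[ℤ] C (n + 1))
    (hφφ : ∀ n, (φ (n + 1)).comp (φ n) = 0)
    (hφdφ : ∀ n, (φ n).comp ((d n).comp (φ n)) = φ n)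
    (π : ∀ n, C n →ₗ[ℤ] C n)
    (hπ0 : π 0 = LinearMap.id - (d 0).comp (φ 0))
    (hπ : ∀ n, π (n + 1) =
      LinearMap.id - (φ n).comp (d n) - (d (n + 1)).comp (φ (n + 1))) :
    ∃ hres : ∀ q, ∀ x ∈ LinearMap.range (π (q + 1)), d q x ∈ LinearMap.range (π q),
      ∀ q, Nonempty
        ((↥(cocyc C d q) ⧸ (cobnd C d q).comap (cocyc C d q).subtype) ≃ₗ[ℤ]
          (↥(cocyc (fun n => ↥(LinearMap.range (π n)))
                (fun n => (d n).restrict (hres n)) q) ⧸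
            (cobnd (fun n => ↥(LinearMap.range (π n)))
                (fun n => (d n).restrict (hres n)) q).comap
              (cocyc (fun n => ↥(LinearMap.range (π n)))
                (fun n => (d n).restrict (hres n)) q).subtype)) := by
  -- pointwise versions of the hypotheses
  have hdd' : ∀ n (x : C (n + 2)), d n (d (n + 1) x) = 0 := by
    intro n x
    simpa using LinearMap.congr_fun (hdd n) x
  have hφφ' : ∀ n (x : C n), φ (n + 1) (φ n x) = 0 := by
    intro n x
    simpa using LinearMap.congr_fun (hφφ n) x
  have hφdφ' : ∀ n (x : C n), φ n (d n (φ n x)) = φ n x := by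
    intro n x
    simpa using LinearMap.congr_fun (hφdφ n) x
  -- π is idempotent
  have hππ : ∀ n (x : C n), π n (π n x) = π n x := by
    intro n x
    cases n with
    | zero =>
        simp only [hπ0, LinearMap.sub_apply, LinearMap.id_apply, LinearMap.comp_apply,
          map_sub, hφdφ']
        try abel
    | succ m =>
        simp only [hπ m, LinearMap.sub_apply, LinearMap.id_apply, LinearMap.comp_apply,
          map_sub, hφdφ', hdd', hφφ', map_zero, sub_zero]
        try abel
  -- π is a chain map
  have hchain : ∀ n (x : C (n + 1)), π n (d n x) = d n (π (n + 1) x) := by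
    intro n x
    cases n with
    | zero =>
        simp only [hπ0, hπ 0, LinearMap.sub_apply, LinearMap.id_apply, LinearMap.comp_apply,
          map_sub, hdd']
        try abel
    | succ m =>
        simp only [hπ m, hπ (m + 1), LinearMap.sub_apply, LinearMap.id_apply,
          LinearMap.comp_apply, map_sub, hdd', map_zero, sub_zero]
        try abel
  have hres : ∀ q, ∀ x ∈ LinearMap.range (π (q + 1)), d q x ∈ LinearMap.range (π q) := by
    rintro q x ⟨y, rfl⟩
    exact ⟨d q y, hchain q y⟩
  let M : ℕ → Type _ := fun n => ↥(LinearMap.range (π n))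
  let dM : ∀ n, M (n + 1) →ₗ[ℤ] M n := fun n => (d n).restrict (hres n)
  -- inclusion and projection
  have hπmem : ∀ n (x : C n), π n x ∈ LinearMap.range (π n) := fun n x => ⟨x, rfl⟩
  let ι : ∀ n, M n →ₗ[ℤ] C n := fun n => (LinearMap.range (π n)).subtype
  let π' : ∀ n, C n →ₗ[ℤ] M n :=
    fun n => (π n).codRestrict (LinearMap.range (π n)) (hπmem n)
  have hπ'ι : ∀ n (x : M n), π' n (ι n x) = x := by
    rintro n ⟨x, y, rfl⟩
    exact Subtype.ext (hππ n y)
  have hcommM : ∀ n (x : C (n + 1)), dM n (π' (n + 1) x) = π' n (d n x) := by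
    intro n x
    exact Subtype.ext (hchain n x).symm
  have hcommι : ∀ n (x : M (n + 1)), ι n (dM n x) = d n (ι (n + 1) x) := fun n x => rfl
  -- the dual maps
  let r : ∀ n, Module.Dual ℤ (C n) →ₗ[ℤ] Module.Dual ℤ (M n) := fun n => (ι n).dualMap
  let e : ∀ n, Module.Dual ℤ (M n) →ₗ[ℤ] Module.Dual ℤ (C n) := fun n => (π' n).dualMap
  have hrc : ∀ q, ∀ c ∈ cocyc C d q, r q c ∈ cocyc M dM q := by
    intro q c hc
    rw [cocyc, LinearMap.mem_ker] at hc ⊢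
    ext x
    have : c (d q (ι (q + 1) x)) = 0 := by simpa using LinearMap.congr_fun hc (ι (q + 1) x)
    simpa [r, hcommι q x] using this
  have hec : ∀ q, ∀ m ∈ cocyc M dM q, e q m ∈ cocyc C d q := by
    intro q m hm
    rw [cocyc, LinearMap.mem_ker] at hm ⊢
    ext x
    have h1 : m (dM q (π' (q + 1) x)) = 0 := by
      simpa using LinearMap.congr_fun hm (π' (q + 1) x)
    have h2 : m (π' q (d q x)) = 0 := by rw [← hcommM q x]; exact h1
    simpa [e] using h2
  have hrb : ∀ q, ∀ c ∈ cobnd C d q, r q c ∈ cobnd M dM q := by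
    intro q
    match q with
    | 0 =>
        intro c hc
        have hc0 : c = 0 := hc
        simp [hc0, cobnd]
    | (n + 1) =>
        rintro c ⟨a, rfl⟩
        refine ⟨r n a, ?_⟩
        ext x
        show a (ι n (dM n x)) = a (d n (ι (n + 1) x))
        rw [hcommι n x]
  have heb : ∀ q, ∀ m ∈ cobnd M dM q, e q m ∈ cobnd C d q := by
    intro q
    match q with
    | 0 =>
        intro m hm
        have hm0 : m = 0 := hm
        simp [hm0, cobnd]
    | (n + 1) =>
        rintro m ⟨a, rfl⟩
        refine ⟨e n a, ?_⟩
        ext x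
        show a (π' n (d n x)) = a (dM n (π' (n + 1) x))
        rw [hcommM n x]
  -- e ∘ r is c ↦ c ∘ π, and this is chain homotopic to the identity
  have her : ∀ q (c : Module.Dual ℤ (C q)) (x : C q), (e q (r q c)) x = c (π q x) :=
    fun q c x => rfl
  have hkey : ∀ q, ∀ c ∈ cocyc C d q, e q (r q c) - c ∈ cobnd C d q := by
    intro q
    match q with
    | 0 =>
        intro c hc
        rw [cocyc, LinearMap.mem_ker] at hc
        have hc' : ∀ y : C 1, c (d 0 y) = 0 := fun y => by
          simpa using LinearMap.congr_fun hc y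
        have h0 : e 0 (r 0 c) - c = 0 := by
          ext x
          simp [her 0 c x, hπ0, hc']
        rw [h0]
        exact Submodule.zero_mem _
    | (n + 1) =>
        intro c hc
        rw [cocyc, LinearMap.mem_ker] at hc
        have hc' : ∀ y : C (n + 2), c (d (n + 1) y) = 0 := fun y => by
          simpa using LinearMap.congr_fun hc y
        refine ⟨-((φ n).dualMap c), ?_⟩
        ext x
        simp only [LinearMap.dualMap_apply', LinearMap.neg_apply, LinearMap.sub_apply,
          LinearMap.comp_apply, her (n + 1) c x, hπ n, LinearMap.id_apply, map_sub, hc']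
        abel
  -- r ∘ e is exactly the identity
  have hre : ∀ q (m : Module.Dual ℤ (M q)), r q (e q m) = m := by
    intro q m
    ext x
    show m (π' q (ι q x)) = m x
    rw [hπ'ι q x]
  refine ⟨hres, fun q => ?_⟩
  -- restricted maps on cocycles
  let rK : ↥(cocyc C d q) →ₗ[ℤ] ↥(cocyc M dM q) := (r q).restrict (hrc q)
  let eK : ↥(cocyc M dM q) →ₗ[ℤ] ↥(cocyc C d q) := (e q).restrict (hec q)
  let BC := (cobnd C d q).comap (cocyc C d q).subtype
  let BM := (cobnd M dM q).comap (cocyc M dM q).subtype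
  have hRle : BC ≤ BM.comap rK := fun x hx => hrb q x.1 hx
  have hEle : BM ≤ BC.comap eK := fun x hx => heb q x.1 hx
  let R := Submodule.mapQ BC BM rK hRle
  let E := Submodule.mapQ BM BC eK hEle
  have hRE : R.comp E = LinearMap.id := by
    apply Submodule.linearMap_qext
    ext m
    show Submodule.Quotient.mk (rK (eK m)) = Submodule.Quotient.mk m
    congr 1
    exact Subtype.ext (hre q m.1)
  have hER : E.comp R = LinearMap.id := by
    apply Submodule.linearMap_qext
    ext c
    show Submodule.Quotient.mk (eK (rK c)) = Submodule.Quotient.mk c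
    rw [Submodule.Quotient.eq]
    exact hkey q c.1 c.2
  exact ⟨LinearEquiv.ofLinear R E hRE hER⟩
end

section
/- Let (C,∂) be a chain complex of free ℤ-modules and q ≥ 1 with finite bases x_1,…,x_m of C_q, y_1,…,y_s of C_{q−1}, and z_1,…,z_p of C_{q+1}. Suppose ∂_q(x_i) = λ_i y_i with λ_i ≥ 2 for i ≤ ℓ and ∂_q(x_i) = 0 for ℓ < i ≤ m; and ∂_{q+1}(z_k) = μ_k x_{σ(k)} with μ_k ≥ 2 for k ≤ r, where σ : {1,…,r} → {ℓ+1,…,m} is injective, and ∂_{q+1}(z_k) = 0 for r < k ≤ p. Then the q-th cohomology of the cochain complex Hom_ℤ(C,ℤ) is isomorphic to (⨁_{i=1}^{ℓ} ℤ/λ_iℤ) ⊕ ℤ^{m−ℓ−r}, and the classes of the dual basis elements x*_1,…,x*_ℓ generate the torsion summands, the class of x*_i having order λ_i. -/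
attribute [local instance 2000] Submodule.module

/-- Auxiliary comparison map. -/
noncomputable def phiAux (M : Type*) [AddCommGroup M] [Module ℤ M]
    (P : Submodule ℤ (Module.Dual ℤ M))
    (ℓ q : ℕ) (N : Fin ℓ → ℕ) (v : Fin ℓ → M) (u : Fin q → M) :
    ↥P →ₗ[ℤ] ((i : Fin ℓ) → ZMod (N i)) × (Fin q → ℤ) :=
  { toFun := fun c => (fun i => ((c.1 (v i) : ℤ) : ZMod (N i)), fun j => c.1 (u j))
    map_add' := by
      intro a b
      refine Prod.ext ?_ ?_ <;> funext i <;> simp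
    map_smul' := by
      intro a c
      refine Prod.ext ?_ ?_ <;> funext i <;> simp }

@[simp] lemma phiAux_apply (M : Type*) [AddCommGroup M] [Module ℤ M]
    (P : Submodule ℤ (Module.Dual ℤ M))
    (ℓ q : ℕ) (N : Fin ℓ → ℕ) (v : Fin ℓ → M) (u : Fin q → M) (c : ↥P) :
    phiAux M P ℓ q N v u c =
      (fun i => ((c.1 (v i) : ℤ) : ZMod (N i)), fun j => c.1 (u j)) := rfl

/-- Let `(C,∂)` be a chain complex of free `ℤ`-modules and `q ≥ 1` (we
write `q = n + 1`, so `∂_q = d n` and `∂_{q+1} = d (n+1)`), with finite bases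
`x_1, …, x_m` of `C_q`, `y_1, …, y_s` of `C_{q−1}` and `z_1, …, z_p` of `C_{q+1}`.
Suppose `∂_q(x_i) = λ_i y_i` with `λ_i ≥ 2` for `i ≤ ℓ` and `∂_q(x_i) = 0` for
`ℓ < i ≤ m`; and `∂_{q+1}(z_k) = μ_k x_{σ(k)}` with `μ_k ≥ 2` for `k ≤ r`, where
`σ : {1,…,r} → {ℓ+1,…,m}` is injective, and `∂_{q+1}(z_k) = 0` for `r < k ≤ p`.
Then the `q`-th cohomology `ker δ^q / im δ^{q−1}` of `Hom_ℤ(C, ℤ)` is isomorphic to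
`(⨁_{i=1}^{ℓ} ℤ/λ_iℤ) ⊕ ℤ^{m−ℓ−r}`, the class of the dual basis element `x*_i`
(`i ≤ ℓ`) mapping to the standard generator of the `i`-th torsion summand and having
order `λ_i`. -/
theorem cohomology_of_snf_data
    (C : ℕ → Type*) [∀ n, AddCommGroup (C n)] [∀ n, Module ℤ (C n)]
    (d : ∀ n, C (n + 1) →ₗ[ℤ] C n)
    (hdd : ∀ n, (d n).comp (d (n + 1)) = 0)
    (n : ℕ) (m s p ℓ r : ℕ) (hlm : ℓ ≤ m) (hls : ℓ ≤ s) (hrp : r ≤ p)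
    (x : Module.Basis (Fin m) ℤ (C (n + 1)))
    (y : Module.Basis (Fin s) ℤ (C n))
    (z : Module.Basis (Fin p) ℤ (C (n + 2)))
    (lam : Fin ℓ → ℤ) (hlam : ∀ i, 2 ≤ lam i)
    (mu : Fin r → ℤ) (hmu : ∀ k, 2 ≤ mu k)
    (σ : Fin r → Fin m) (hσinj : Function.Injective σ)
    (hσrange : ∀ k, ℓ ≤ (σ k : ℕ))
    (hd1 : ∀ i : Fin ℓ, d n (x (Fin.castLE hlm i)) = lam i • y (Fin.castLE hls i))
    (hd2 : ∀ i : Fin m, ℓ ≤ (i : ℕ) → d n (x i) = 0)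
    (hd3 : ∀ k : Fin r, d (n + 1) (z (Fin.castLE hrp k)) = mu k • x (σ k))
    (hd4 : ∀ k : Fin p, r ≤ (k : ℕ) → d (n + 1) (z k) = 0) :
    ∃ e : (↥(cocyc C d (n + 1)) ⧸
        (LinearMap.range (d n).dualMap).comap (cocyc C d (n + 1)).subtype) ≃ₗ[ℤ]
        ((i : Fin ℓ) → ZMod (lam i).toNat) × (Fin (m - ℓ - r) → ℤ),
      ∀ i : Fin ℓ, ∀ hmem : x.coord (Fin.castLE hlm i) ∈ cocyc C d (n + 1),
        e (Submodule.Quotient.mk ⟨x.coord (Fin.castLE hlm i), hmem⟩) =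
          (Pi.single i 1, 0) ∧
        addOrderOf
          (Submodule.Quotient.mk ⟨x.coord (Fin.castLE hlm i), hmem⟩ :
            ↥(cocyc C d (n + 1)) ⧸
              (LinearMap.range (d n).dualMap).comap (cocyc C d (n + 1)).subtype) =
          (lam i).toNat := by
  classical
  set K := (LinearMap.range (d n).dualMap).comap (cocyc C d (n + 1)).subtype with hKdef
  have hlamnat : ∀ i, ((lam i).toNat : ℤ) = lam i := fun i =>
    Int.toNat_of_nonneg (by linarith [hlam i])
  have hcoord : ∀ (i j : Fin m), x.coord i (x j) = if j = i then 1 else 0 := by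
    intro i j
    simp [Module.Basis.coord_apply, Module.Basis.repr_self, Finsupp.single_apply]
  -- the free part index set
  set F : Finset (Fin m) :=
    Finset.univ.filter (fun i : Fin m => ℓ ≤ (i : ℕ) ∧ i ∉ Set.range σ) with hFdef
  have hFcard : F.card = m - ℓ - r := by
    have hA : (Finset.univ.filter (fun i : Fin m => ℓ ≤ (i:ℕ))).card = m - ℓ := by
      have : (Finset.univ.filter (fun i : Fin m => ℓ ≤ (i:ℕ))) =
          Finset.univ.map ⟨fun j : Fin (m - ℓ) => (⟨ℓ + j, by omega⟩ : Fin m), by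
            intro a b hab
            simpa [Fin.ext_iff] using hab⟩ := by
        ext i
        simp only [Finset.mem_filter, Finset.mem_univ, true_and, Finset.mem_map,
          Function.Embedding.coeFn_mk, Fin.ext_iff]
        constructor
        · intro hi; exact ⟨⟨i - ℓ, by omega⟩, by show ℓ + ((i : ℕ) - ℓ) = i; omega⟩
        · rintro ⟨j, hj⟩; have hj' : ℓ + (j : ℕ) = i := hj; omega
      rw [this]; simp
    have hsub : Finset.univ.image σ ⊆ Finset.univ.filter (fun i : Fin m => ℓ ≤ (i:ℕ)) := by
      intro i hi
      simp only [Finset.mem_image] at hi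
      obtain ⟨k, -, rfl⟩ := hi
      simp [hσrange k]
    have hF : F = (Finset.univ.filter (fun i : Fin m => ℓ ≤ (i:ℕ))) \ Finset.univ.image σ := by
      ext i
      simp [hFdef, Set.mem_range, and_comm]
    rw [hF, Finset.card_sdiff_of_subset hsub, hA, Finset.card_image_of_injective _ hσinj]; simp
  set τ : Fin (m - ℓ - r) → Fin m :=
    fun j => (F.equivFin.symm (Fin.cast hFcard.symm j) : Fin m) with hτdef
  have hτF : ∀ j, τ j ∈ F := fun j => (F.equivFin.symm (Fin.cast hFcard.symm j)).2
  have hτge : ∀ j, ℓ ≤ ((τ j : Fin m) : ℕ) := by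
    intro j
    have := hτF j
    rw [hFdef, Finset.mem_filter] at this
    exact this.2.1
  have hτσ : ∀ j, τ j ∉ Set.range σ := by
    intro j
    have := hτF j
    rw [hFdef, Finset.mem_filter] at this
    exact this.2.2
  have hτinj : Function.Injective τ := by
    intro a b hab
    have h1 : F.equivFin.symm (Fin.cast hFcard.symm a) = F.equivFin.symm (Fin.cast hFcard.symm b) :=
      Subtype.ext hab
    have h2 := F.equivFin.symm.injective h1
    simpa [Fin.ext_iff] using congrArg Fin.val h2
  have hτsurj : ∀ i ∈ F, ∃ j, τ j = i := by
    intro i hi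
    refine ⟨Fin.cast hFcard (F.equivFin ⟨i, hi⟩), ?_⟩
    simp [hτdef]
  have hτne : ∀ (j : Fin (m - ℓ - r)) (i : Fin ℓ), τ j ≠ Fin.castLE hlm i := by
    intro j i hEq
    have h1 := hτge j
    have h2 : ((Fin.castLE hlm i : Fin m) : ℕ) = (i : ℕ) := rfl
    have := i.isLt
    rw [hEq] at h1
    omega
  -- characterization of cocycles
  have hcocyc : ∀ c : Module.Dual ℤ (C (n + 1)),
      c ∈ cocyc C d (n + 1) ↔ ∀ k : Fin r, c (x (σ k)) = 0 := by
    intro c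
    constructor
    · intro hc k
      have h0 : (d (n + 1)).dualMap c = 0 := by
        simpa [cocyc, LinearMap.mem_ker] using hc
      have h2 : c (d (n + 1) (z (Fin.castLE hrp k))) = 0 := by
        have := congrArg (fun f : Module.Dual ℤ (C (n + 2)) => f (z (Fin.castLE hrp k))) h0
        simpa [LinearMap.dualMap_apply] using this
      rw [hd3 k] at h2
      rw [map_zsmul] at h2
      simp only [zsmul_eq_mul, Int.cast_id] at h2
      have hmu0 : mu k ≠ 0 := by have := hmu k; omega
      exact (mul_eq_zero.mp h2).resolve_left hmu0
    · intro h
      show (d (n + 1)).dualMap c = 0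
      apply z.ext
      intro k
      simp only [LinearMap.dualMap_apply, LinearMap.zero_apply]
      by_cases hk : (k : ℕ) < r
      · have hkk : k = Fin.castLE hrp ⟨k, hk⟩ := by simp [Fin.ext_iff]
        rw [hkk, hd3]
        simp [h]
      · rw [hd4 k (le_of_not_gt hk)]
        simp
  -- the comparison map
  set φ : ↥(cocyc C d (n + 1)) →ₗ[ℤ]
      ((i : Fin ℓ) → ZMod (lam i).toNat) × (Fin (m - ℓ - r) → ℤ) :=
    phiAux (C (n + 1)) (cocyc C d (n + 1)) ℓ (m - ℓ - r) (fun i => (lam i).toNat)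
      (fun i => x (Fin.castLE hlm i)) (fun j => x (τ j)) with hφdef
  have hφapply : ∀ c : ↥(cocyc C d (n + 1)),
      φ c = (fun i => ((c.1 (x (Fin.castLE hlm i)) : ℤ) : ZMod (lam i).toNat),
             fun j => c.1 (x (τ j))) := fun c => rfl
  -- surjectivity
  have hsurj : Function.Surjective φ := by
    rintro ⟨a, b⟩
    choose a' ha' using fun i => ZMod.intCast_surjective (a i)
    set coeffs : Fin m → ℤ := fun t =>
      (if ht : (t : ℕ) < ℓ then a' ⟨t, ht⟩ else 0) + ∑ j, if t = τ j then b j else 0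
      with hcoeffs
    set c : Module.Dual ℤ (C (n + 1)) := x.constr ℤ coeffs with hcdef
    have hceval : ∀ t : Fin m, c (x t) = coeffs t := fun t => x.constr_basis ℤ coeffs t
    have hcmem : c ∈ cocyc C d (n + 1) := by
      rw [hcocyc]
      intro k
      rw [hceval]
      simp only [hcoeffs]
      have h1 : ¬ ((σ k : ℕ) < ℓ) := by have := hσrange k; omega
      rw [dif_neg h1, Finset.sum_eq_zero, zero_add]
      intro j _
      have : σ k ≠ τ j := fun hEq => hτσ j ⟨k, hEq⟩
      simp [this]
    refine ⟨⟨c, hcmem⟩, ?_⟩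
    rw [hφapply]
    refine Prod.ext ?_ ?_
    · funext i
      have hv : c (x (Fin.castLE hlm i)) = a' i := by
        rw [hceval]
        simp only [hcoeffs]
        have h1 : ((Fin.castLE hlm i : Fin m) : ℕ) < ℓ := i.isLt
        rw [dif_pos h1, Finset.sum_eq_zero, add_zero]
        · exact congrArg a' (Fin.ext rfl)
        · intro j _
          have hne : Fin.castLE hlm i ≠ τ j := fun hEq => hτne j i hEq.symm
          simp [hne]
      show ((c (x (Fin.castLE hlm i)) : ℤ) : ZMod (lam i).toNat) = a i
      rw [hv]
      exact ha' i
    · funext j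
      show c (x (τ j)) = b j
      rw [hceval]
      simp only [hcoeffs]
      have h1 : ¬ ((τ j : ℕ) < ℓ) := by have := hτge j; omega
      rw [dif_neg h1, Finset.sum_eq_single j, zero_add, if_pos rfl]
      · intro j' _ hj'
        have : τ j ≠ τ j' := fun hEq => hj' (hτinj hEq).symm
        simp [this]
      · intro h
        exact absurd (Finset.mem_univ j) h
  -- kernel = coboundaries
  have hker : LinearMap.ker φ = K := by
    ext c
    obtain ⟨c, hc⟩ := c
    have hφc : φ ⟨c, hc⟩ = (fun i => ((c (x (Fin.castLE hlm i)) : ℤ) : ZMod (lam i).toNat),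
        fun j => c (x (τ j))) := rfl
    rw [LinearMap.mem_ker, hφc]
    constructor
    · intro h0
      have h1 : ∀ i : Fin ℓ, ((c (x (Fin.castLE hlm i)) : ℤ) : ZMod (lam i).toNat) = 0 :=
        fun i => congrFun (congrArg Prod.fst h0) i
      have h2 : ∀ j, c (x (τ j)) = 0 := fun j => congrFun (congrArg Prod.snd h0) j
      have hdvd : ∀ i : Fin ℓ, lam i ∣ c (x (Fin.castLE hlm i)) := by
        intro i
        have := (ZMod.intCast_zmod_eq_zero_iff_dvd _ _).mp (h1 i)
        rwa [hlamnat i] at this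
      choose w hw using hdvd
      set gco : Fin s → ℤ := fun t => if ht : (t : ℕ) < ℓ then w ⟨t, ht⟩ else 0 with hgco
      set g : Module.Dual ℤ (C n) := y.constr ℤ gco with hgdef
      have hgy : ∀ t : Fin s, g (y t) = gco t := fun t => y.constr_basis ℤ gco t
      show c ∈ LinearMap.range (d n).dualMap
      refine ⟨g, ?_⟩
      apply x.ext
      intro t
      simp only [LinearMap.dualMap_apply]
      by_cases ht : (t : ℕ) < ℓ
      · have htt : t = Fin.castLE hlm ⟨t, ht⟩ := by simp [Fin.ext_iff]
        rw [htt, hd1, map_zsmul, hgy]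
        simp only [zsmul_eq_mul, Int.cast_id, hgco]
        have h3 : ((Fin.castLE hls (⟨t, ht⟩ : Fin ℓ) : Fin s) : ℕ) < ℓ :=
          (⟨t, ht⟩ : Fin ℓ).isLt
        rw [dif_pos h3]
        exact (hw ⟨t, ht⟩).symm
      · rw [hd2 t (le_of_not_gt ht)]
        simp only [map_zero]
        by_cases htr : t ∈ Set.range σ
        · obtain ⟨k, rfl⟩ := htr
          exact ((hcocyc c).mp hc k).symm
        · have htF : t ∈ F := by
            rw [hFdef, Finset.mem_filter]
            exact ⟨Finset.mem_univ t, le_of_not_gt ht, htr⟩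
          obtain ⟨j, rfl⟩ := hτsurj t htF
          exact (h2 j).symm
    · rintro ⟨g, hg⟩
      have hgc : (d n).dualMap g = c := hg
      have hg' : ∀ t, c (x t) = g (d n (x t)) := by
        intro t
        rw [← hgc, LinearMap.dualMap_apply]
      refine Prod.ext ?_ ?_
      · funext i
        show ((c (x (Fin.castLE hlm i)) : ℤ) : ZMod (lam i).toNat) = 0
        rw [hg' (Fin.castLE hlm i), hd1, map_zsmul]
        simp only [zsmul_eq_mul, Int.cast_id, Int.cast_mul]
        have hz : ((lam i : ℤ) : ZMod (lam i).toNat) = 0 := by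
          rw [← hlamnat i]
          exact_mod_cast ZMod.natCast_self (lam i).toNat
        rw [hz, zero_mul]
      · funext j
        show c (x (τ j)) = 0
        rw [hg' (τ j), hd2 (τ j) (hτge j)]
        simp
  -- build the equivalence
  have hKle : K ≤ LinearMap.ker φ := hker.ge
  set ebar := K.liftQ φ hKle with hebar
  have hinj : Function.Injective ebar := by
    rw [← LinearMap.ker_eq_bot]
    exact Submodule.ker_liftQ_eq_bot _ _ _ hker.le
  have hsurjQ : Function.Surjective ebar := by
    intro w
    obtain ⟨v, hv⟩ := hsurj w
    exact ⟨Submodule.Quotient.mk v, by rwa [hebar, Submodule.liftQ_apply]⟩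
  refine ⟨LinearEquiv.ofBijective ebar ⟨hinj, hsurjQ⟩, ?_⟩
  intro i hmem
  have hval : φ ⟨x.coord (Fin.castLE hlm i), hmem⟩ = (Pi.single i 1, 0) := by
    rw [hφapply]
    refine Prod.ext ?_ ?_
    · funext i'
      simp only [hcoord]
      by_cases hii : i' = i
      · subst hii
        simp [Pi.single_eq_same]
      · have hne : Fin.castLE hlm i' ≠ Fin.castLE hlm i :=
          fun hEq => hii ((Fin.castLE_injective hlm) hEq)
        simp [hne, Pi.single_eq_of_ne hii]
    · funext j
      simp only [hcoord]
      simp [hτne j i]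
  have heq : (LinearEquiv.ofBijective ebar ⟨hinj, hsurjQ⟩)
      (Submodule.Quotient.mk ⟨x.coord (Fin.castLE hlm i), hmem⟩) = (Pi.single i 1, 0) := by
    show ebar (Submodule.Quotient.mk ⟨x.coord (Fin.castLE hlm i), hmem⟩) = _
    rw [hebar, Submodule.liftQ_apply, hval]
  refine ⟨heq, ?_⟩
  have hord1 : addOrderOf (Submodule.Quotient.mk
      (⟨x.coord (Fin.castLE hlm i), hmem⟩ : ↥(cocyc C d (n + 1))) :
      ↥(cocyc C d (n + 1)) ⧸ K) =
      addOrderOf ((Pi.single i 1, 0) :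
        ((i : Fin ℓ) → ZMod (lam i).toNat) × (Fin (m - ℓ - r) → ℤ)) := by
    rw [← heq]
    exact (addOrderOf_injective (LinearEquiv.ofBijective ebar ⟨hinj, hsurjQ⟩).toAddMonoidHom
      (LinearEquiv.ofBijective ebar ⟨hinj, hsurjQ⟩).injective _).symm
  rw [hord1]
  have hf : Function.Injective
      ((AddMonoidHom.inl ((i : Fin ℓ) → ZMod (lam i).toNat) (Fin (m - ℓ - r) → ℤ)).comp
        (AddMonoidHom.single (fun i : Fin ℓ => ZMod (lam i).toNat) i)) := by
    intro a b hab
    have h1 : Pi.single (M := fun i : Fin ℓ => ZMod (lam i).toNat) i a = Pi.single i b :=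
      congrArg Prod.fst hab
    exact Pi.single_injective i h1
  have horder := addOrderOf_injective
    ((AddMonoidHom.inl ((i : Fin ℓ) → ZMod (lam i).toNat) (Fin (m - ℓ - r) → ℤ)).comp
      (AddMonoidHom.single (fun i : Fin ℓ => ZMod (lam i).toNat) i)) hf 1
  simp only [AddMonoidHom.comp_apply, AddMonoidHom.single_apply, AddMonoidHom.inl_apply]
    at horder
  rw [horder]
  exact ZMod.addOrderOf_one _
end
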